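/- arXiv:2305.08951 — 4 statements merged into one kernel-verified Lean document; each statement's English description precedes it below -/
import Mathlib

section
/- Let G_d ∈ ℝ^{n×n} and let d(s) = exp(s·G_d), s ∈ ℝ, be the associated linear continuous group in ℝⁿ. Let P ∈ ℝ^{n×n} be symmetric, and let ‖x‖_P = √(xᵀPx). Then d is a dilation that is strictly monotone with respect to ‖·‖_P (i.e., there exists β > 0 such that ‖d(s)x‖_P ≤ e^{βs}‖x‖_P for all s ≤ 0 and all x ∈ ℝⁿ) if and only if P ≻ 0 and P·G_d + G_dᵀ·P ≻ 0. -/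
open Matrix Filter Topology Set

/-- The linear continuous group `d(s) = exp (s • G)` generated by `G`. -/
noncomputable def dilMat {n : ℕ} (G : Matrix (Fin n) (Fin n) ℝ) (s : ℝ) :
    Matrix (Fin n) (Fin n) ℝ := NormedSpace.exp (s • G)

/-- The weighted "norm" `‖x‖_P = √(xᵀ P x)` associated with a symmetric matrix `P`. -/
noncomputable def normP {n : ℕ} (P : Matrix (Fin n) (Fin n) ℝ) (x : Fin n → ℝ) : ℝ :=
  Real.sqrt (x ⬝ᵥ (P *ᵥ x))

set_option maxHeartbeats 1000000

section Aux
attribute [local instance] Matrix.linftyOpNormedRing Matrix.linftyOpNormedAlgebra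

variable {n : ℕ} (G P : Matrix (Fin n) (Fin n) ℝ)

theorem dilMat_zero : dilMat G 0 = 1 := by
  simp [dilMat, NormedSpace.exp_zero]

theorem dilMat_add (s t : ℝ) : dilMat G (s + t) = dilMat G s * dilMat G t := by
  rw [dilMat, add_smul]
  exact Matrix.exp_add_of_commute _ _ (Commute.smul_left (Commute.smul_right rfl t) s)

theorem dilMat_mulVec (s t : ℝ) (x : Fin n → ℝ) :
    dilMat G s *ᵥ (dilMat G t *ᵥ x) = dilMat G (s + t) *ᵥ x := by
  rw [dilMat_add, mulVec_mulVec]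

theorem dilMat_cancel (t : ℝ) (x : Fin n → ℝ) :
    dilMat G t *ᵥ (dilMat G (-t) *ᵥ x) = x := by
  rw [dilMat_mulVec, add_neg_cancel, dilMat_zero, one_mulVec]

theorem dilMat_mulVec_ne_zero (t : ℝ) {x : Fin n → ℝ} (hx : x ≠ 0) :
    dilMat G t *ᵥ x ≠ 0 := by
  intro h
  apply hx
  have := congrArg (fun y => dilMat G (-t) *ᵥ y) h
  simp only [Matrix.mulVec_zero] at this
  rw [dilMat_mulVec, neg_add_cancel, dilMat_zero, one_mulVec] at this
  exact this

theorem dilMat_hasDerivAt (s : ℝ) :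
    HasDerivAt (fun u => dilMat G u) (dilMat G s * G) s := by
  exact hasDerivAt_exp_smul_const (𝕂 := ℝ) G s

noncomputable def mvLin (x : Fin n → ℝ) : (Matrix (Fin n) (Fin n) ℝ) →L[ℝ] (Fin n → ℝ) :=
  LinearMap.toContinuousLinearMap
    { toFun := fun M => M *ᵥ x
      map_add' := fun A B => Matrix.add_mulVec A B x
      map_smul' := fun c A => Matrix.smul_mulVec c A x }

noncomputable def mvLin2 (A : Matrix (Fin n) (Fin n) ℝ) : (Fin n → ℝ) →L[ℝ] (Fin n → ℝ) :=
  LinearMap.toContinuousLinearMap (Matrix.mulVecLin A)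

theorem mulVec_hasDerivAt (s : ℝ) (x : Fin n → ℝ) :
    HasDerivAt (fun u => dilMat G u *ᵥ x) ((dilMat G s * G) *ᵥ x) s :=
  (mvLin x).hasFDerivAt.comp_hasDerivAt s (dilMat_hasDerivAt G s)

theorem hasDerivAt_dotProduct {f g : ℝ → Fin n → ℝ} {f' g' : Fin n → ℝ} {s : ℝ}
    (hf : HasDerivAt f f' s) (hg : HasDerivAt g g' s) :
    HasDerivAt (fun u => f u ⬝ᵥ g u) (f' ⬝ᵥ g s + f s ⬝ᵥ g') s := by
  simp only [dotProduct, ← Finset.sum_add_distrib]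
  exact HasDerivAt.fun_sum fun i _ =>
    ((hasDerivAt_pi.mp hf i).mul (hasDerivAt_pi.mp hg i))

/-- the function `s ↦ ‖d(s)x‖_P^2`. -/
noncomputable def qF (x : Fin n → ℝ) (s : ℝ) : ℝ :=
  (dilMat G s *ᵥ x) ⬝ᵥ (P *ᵥ (dilMat G s *ᵥ x))

theorem qF_hasDerivAt (x : Fin n → ℝ) (s : ℝ) :
    HasDerivAt (qF G P x)
      ((dilMat G s *ᵥ x) ⬝ᵥ ((P * G + Gᵀ * P) *ᵥ (dilMat G s *ᵥ x))) s := by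
  have hy := mulVec_hasDerivAt G s x
  have hPy : HasDerivAt (fun u => P *ᵥ (dilMat G u *ᵥ x)) (P *ᵥ ((dilMat G s * G) *ᵥ x)) s :=
    (mvLin2 P).hasFDerivAt.comp_hasDerivAt s hy
  have h := hasDerivAt_dotProduct hy hPy
  have hyG : (dilMat G s * G) *ᵥ x = G *ᵥ (dilMat G s *ᵥ x) := by
    rw [Matrix.mulVec_mulVec]
    exact congrArg (· *ᵥ x) (((Commute.refl G).smul_left s).exp_left).eq
  rw [hyG] at h
  convert h using 1
  · rfl
  set y := dilMat G s *ᵥ x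
  rw [Matrix.add_mulVec, dotProduct_add, ← Matrix.mulVec_mulVec, ← Matrix.mulVec_mulVec]
  rw [add_comm]
  congr 1
  rw [Matrix.dotProduct_mulVec y Gᵀ (P *ᵥ y), Matrix.vecMul_transpose]

theorem qF_zero (x : Fin n → ℝ) : qF G P x 0 = x ⬝ᵥ (P *ᵥ x) := by
  simp [qF, dilMat_zero]

theorem normP_dil_eq (x : Fin n → ℝ) (s : ℝ) :
    normP P (dilMat G s *ᵥ x) = Real.sqrt (qF G P x s) := rfl

theorem normP_eq_qF (x : Fin n → ℝ) : normP P x = Real.sqrt (qF G P x 0) := by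
  rw [normP, qF_zero]

theorem qF_shift (x : Fin n → ℝ) (s t : ℝ) :
    qF G P (dilMat G t *ᵥ x) s = qF G P x (s + t) := by
  rw [qF, qF, dilMat_mulVec]

theorem qF_smul (x : Fin n → ℝ) (c s : ℝ) :
    qF G P (c • x) s = c ^ 2 * qF G P x s := by
  simp [qF, Matrix.mulVec_smul, smul_dotProduct, dotProduct_smul]
  ring

theorem qF_quad (x : Fin n → ℝ) (s : ℝ) :
    qF G P x s = x ⬝ᵥ (((dilMat G s)ᵀ * P * dilMat G s) *ᵥ x) := by
  rw [qF, ← Matrix.mulVec_mulVec, ← Matrix.mulVec_mulVec,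
    Matrix.dotProduct_mulVec x (dilMat G s)ᵀ _, Matrix.vecMul_transpose]

theorem continuous_quadratic (M : Matrix (Fin n) (Fin n) ℝ) :
    Continuous fun x : Fin n → ℝ => x ⬝ᵥ (M *ᵥ x) := by
  simp only [dotProduct]
  refine continuous_finset_sum _ fun i _ => (continuous_apply i).mul ?_
  exact (continuous_apply i).comp (mvLin2 M).continuous

end Aux

section Fwd
variable {n : ℕ} {G P : Matrix (Fin n) (Fin n) ℝ} {β : ℝ}

theorem lemA (hβ : 0 < β)
    (hmono : ∀ s ≤ (0:ℝ), ∀ x, Real.sqrt (qF G P x s) ≤ Real.exp (β*s) * Real.sqrt (qF G P x 0))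
    {x : Fin n → ℝ} (hx : qF G P x 0 ≤ 0) {s : ℝ} (hs : s ≤ 0) : qF G P x s ≤ 0 := by
  have h := hmono s hs x
  rw [Real.sqrt_eq_zero'.mpr hx, mul_zero] at h
  exact Real.sqrt_eq_zero'.mp (le_antisymm h (Real.sqrt_nonneg _))

theorem lemU (hβ : 0 < β)
    (hmono : ∀ s ≤ (0:ℝ), ∀ x, Real.sqrt (qF G P x s) ≤ Real.exp (β*s) * Real.sqrt (qF G P x 0))
    {x : Fin n → ℝ} {t t' : ℝ} (h : 0 < qF G P x t) (htt' : t ≤ t') : 0 < qF G P x t' := by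
  by_contra h'
  push_neg at h'
  have h0 : qF G P (dilMat G t' *ᵥ x) 0 ≤ 0 := by
    rw [qF_shift, zero_add]; exact h'
  have h2 := lemA hβ hmono h0 (s := t - t') (by linarith)
  rw [qF_shift, sub_add_cancel] at h2
  linarith

theorem fwd_pos
    (hlim : ∀ x : Fin n → ℝ, x ≠ 0 → Tendsto (fun s => Real.sqrt (qF G P x s)) atTop atTop)
    (hβ : 0 < β)
    (hmono : ∀ s ≤ (0:ℝ), ∀ x, Real.sqrt (qF G P x s) ≤ Real.exp (β*s) * Real.sqrt (qF G P x 0)) :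
    ∀ v : Fin n → ℝ, v ≠ 0 → 0 < v ⬝ᵥ (P *ᵥ v) := by
  intro v hv
  by_contra hq
  push_neg at hq
  have hq0 : qF G P v 0 ≤ 0 := by rwa [qF_zero]
  set K := Metric.sphere (0 : Fin n → ℝ) 1 ∩ {x | x ⬝ᵥ (P *ᵥ x) ≤ 0} with hK
  have hKc : IsCompact K :=
    (isCompact_sphere 0 1).inter_right (isClosed_le (continuous_quadratic P) continuous_const)
  set U : ℕ → Set (Fin n → ℝ) := fun T => {x | 0 < qF G P x T} with hU
  have hUo : ∀ T : ℕ, IsOpen (U T) := fun T => by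
    simpa [hU, qF_quad] using
      isOpen_lt continuous_const (continuous_quadratic ((dilMat G (T:ℝ))ᵀ * P * dilMat G (T:ℝ)))
  have hUmono : ∀ {T T' : ℕ}, T ≤ T' → U T ⊆ U T' := fun {T T'} h x hx =>
    lemU hβ hmono hx (by exact_mod_cast h)
  have hcover : K ⊆ ⋃ T, U T := by
    intro x hxK
    have hx0 : x ≠ 0 := by
      intro h
      have := hxK.1
      rw [h, mem_sphere_iff_norm] at this
      simp at this
    obtain ⟨s, hs⟩ := ((hlim x hx0).eventually_ge_atTop 1).exists
    have hqs : 0 < qF G P x s := by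
      by_contra h
      push_neg at h
      rw [Real.sqrt_eq_zero'.mpr h] at hs
      linarith
    exact mem_iUnion.mpr ⟨⌈s⌉₊, lemU hβ hmono hqs (Nat.le_ceil s)⟩
  have hdir : Directed (· ⊆ ·) U := fun T T' =>
    ⟨max T T', hUmono (le_max_left T T'), hUmono (le_max_right T T')⟩
  obtain ⟨T, hT⟩ := hKc.elim_directed_cover U hUo hcover hdir
  set w := dilMat G (-(T:ℝ)) *ᵥ v with hwdef
  have hw : w ≠ 0 := dilMat_mulVec_ne_zero G _ hv
  have hwq : w ⬝ᵥ (P *ᵥ w) ≤ 0 := lemA hβ hmono hq0 (neg_nonpos.mpr (Nat.cast_nonneg T))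
  set c := ‖w‖ with hcdef
  have hc : 0 < c := norm_pos_iff.mpr hw
  have hx₀K : c⁻¹ • w ∈ K := by
    constructor
    · rw [mem_sphere_iff_norm, sub_zero, norm_smul, norm_inv, norm_norm]
      field_simp
    · show (c⁻¹ • w) ⬝ᵥ (P *ᵥ (c⁻¹ • w)) ≤ 0
      rw [Matrix.mulVec_smul, smul_dotProduct, dotProduct_smul, smul_eq_mul,
        smul_eq_mul, ← mul_assoc]
      exact mul_nonpos_of_nonneg_of_nonpos (by positivity) hwq
  have hx₀U : 0 < qF G P (c⁻¹ • w) (T:ℝ) := hT hx₀K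
  have hval : qF G P (c⁻¹ • w) (T:ℝ) = c⁻¹^2 * (v ⬝ᵥ (P *ᵥ v)) := by
    rw [qF_smul]
    congr 2
    show (dilMat G (T:ℝ) *ᵥ w) ⬝ᵥ (P *ᵥ (dilMat G (T:ℝ) *ᵥ w)) = _
    rw [hwdef, dilMat_cancel]
  rw [hval] at hx₀U
  nlinarith [sq_nonneg c⁻¹]

theorem deriv_nonneg_of_le {f : ℝ → ℝ} {d : ℝ} (hf : HasDerivAt f d 0)
    (h : ∀ s ≤ (0:ℝ), f s ≤ f 0) : 0 ≤ d := by
  have h1 : Tendsto (slope f 0) (𝓝[<] 0) (𝓝 d) :=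
    (hasDerivAt_iff_tendsto_slope.mp hf).mono_left
      (nhdsWithin_mono 0 fun x hx => ne_of_lt hx)
  refine ge_of_tendsto h1 ?_
  filter_upwards [self_mem_nhdsWithin] with s hs
  have hs' : (s:ℝ) < 0 := hs
  rw [slope_def_field]
  rw [div_nonneg_iff]
  right
  constructor
  · linarith [h s hs'.le]
  · linarith

theorem fwd_Qpos
    (hPd2 : ∀ v : Fin n → ℝ, v ≠ 0 → 0 < v ⬝ᵥ (P *ᵥ v))
    (hβ : 0 < β)
    (hmono : ∀ s ≤ (0:ℝ), ∀ x, Real.sqrt (qF G P x s) ≤ Real.exp (β*s) * Real.sqrt (qF G P x 0)) :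
    ∀ x : Fin n → ℝ, x ≠ 0 → 0 < x ⬝ᵥ ((P * G + Gᵀ * P) *ᵥ x) := by
  intro x hx
  have hq0 : 0 < qF G P x 0 := by rw [qF_zero]; exact hPd2 x hx
  have hqpos : ∀ s : ℝ, 0 < qF G P x s := fun s =>
    hPd2 (dilMat G s *ᵥ x) (dilMat_mulVec_ne_zero G s hx)
  have key : ∀ s ≤ (0:ℝ), Real.exp (-(2*β)*s) * qF G P x s ≤ qF G P x 0 := by
    intro s hs
    have h := hmono s hs x
    have h2 : qF G P x s ≤ Real.exp (2*β*s) * qF G P x 0 := by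
      have h3 := mul_self_le_mul_self (Real.sqrt_nonneg (qF G P x s)) h
      rw [Real.mul_self_sqrt (hqpos s).le] at h3
      calc qF G P x s ≤ (Real.exp (β*s) * Real.sqrt (qF G P x 0)) *
            (Real.exp (β*s) * Real.sqrt (qF G P x 0)) := h3
        _ = (Real.exp (β*s) * Real.exp (β*s)) *
            (Real.sqrt (qF G P x 0) * Real.sqrt (qF G P x 0)) := by ring
        _ = Real.exp (2*β*s) * qF G P x 0 := by
            rw [← Real.exp_add, Real.mul_self_sqrt hq0.le]; ring_nf
    calc Real.exp (-(2*β)*s) * qF G P x s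
        ≤ Real.exp (-(2*β)*s) * (Real.exp (2*β*s) * qF G P x 0) := by
          exact mul_le_mul_of_nonneg_left h2 (Real.exp_nonneg _)
      _ = qF G P x 0 := by rw [← mul_assoc, ← Real.exp_add]; ring_nf; rw [Real.exp_zero, one_mul]
  have hd : HasDerivAt (fun u => Real.exp (-(2*β)*u) * qF G P x u)
      (-(2*β) * qF G P x 0 + x ⬝ᵥ ((P * G + Gᵀ * P) *ᵥ x)) 0 := by
    have h1 : HasDerivAt (fun u : ℝ => Real.exp (-(2*β)*u)) (-(2*β)) 0 := by
      simpa using ((hasDerivAt_id (0:ℝ)).const_mul (-(2*β))).exp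
    have h2 := qF_hasDerivAt G P x 0
    have h3 := h1.mul h2
    simp only [mul_zero, Real.exp_zero, one_mul, dilMat_zero, Matrix.one_mulVec] at h3 ⊢
    rw [qF_zero] at h3 ⊢
    exact h3
  have h0 := deriv_nonneg_of_le hd (by
    intro s hs
    have := key s hs
    simpa [Real.exp_zero] using this)
  rw [qF_zero] at h0 hq0
  nlinarith

end Fwd

section Bwd
variable {n : ℕ} {G P : Matrix (Fin n) (Fin n) ℝ} {β : ℝ}

theorem smul_quad (M : Matrix (Fin n) (Fin n) ℝ) (c : ℝ) (y : Fin n → ℝ) :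
    (c • y) ⬝ᵥ (M *ᵥ (c • y)) = c^2 * (y ⬝ᵥ (M *ᵥ y)) := by
  rw [Matrix.mulVec_smul, smul_dotProduct, dotProduct_smul, smul_eq_mul,
    smul_eq_mul, ← mul_assoc, sq]

theorem exists_beta {Q : Matrix (Fin n) (Fin n) ℝ}
    (hPpos : ∀ v : Fin n → ℝ, v ≠ 0 → 0 < v ⬝ᵥ (P *ᵥ v))
    (hQpos : ∀ v : Fin n → ℝ, v ≠ 0 → 0 < v ⬝ᵥ (Q *ᵥ v)) :
    ∃ β : ℝ, 0 < β ∧ ∀ y : Fin n → ℝ, β * (y ⬝ᵥ (P *ᵥ y)) ≤ y ⬝ᵥ (Q *ᵥ y) := by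
  rcases isEmpty_or_nonempty (Fin n) with hn | hn
  · refine ⟨1, one_pos, fun y => ?_⟩
    simp [dotProduct]
  · obtain ⟨i⟩ := hn
    haveI : Inhabited (Fin n) := ⟨i⟩
    have hSne : (Metric.sphere (0 : Fin n → ℝ) 1).Nonempty :=
      NormedSpace.sphere_nonempty.mpr zero_le_one
    have hScomp : IsCompact (Metric.sphere (0 : Fin n → ℝ) 1) := isCompact_sphere 0 1
    obtain ⟨a, haS, ha⟩ := hScomp.exists_isMinOn hSne (continuous_quadratic Q).continuousOn
    obtain ⟨b, hbS, hb⟩ := hScomp.exists_isMaxOn hSne (continuous_quadratic P).continuousOn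
    have hane : a ≠ 0 := by
      intro h; rw [h, mem_sphere_iff_norm] at haS; simp at haS
    have hbne : b ≠ 0 := by
      intro h; rw [h, mem_sphere_iff_norm] at hbS; simp at hbS
    have hεQ : 0 < a ⬝ᵥ (Q *ᵥ a) := hQpos a hane
    have hMP : 0 < b ⬝ᵥ (P *ᵥ b) := hPpos b hbne
    refine ⟨(a ⬝ᵥ (Q *ᵥ a)) / (b ⬝ᵥ (P *ᵥ b)), div_pos hεQ hMP, fun y => ?_⟩
    rcases eq_or_ne y 0 with rfl | hy
    · simp
    have hny : 0 < ‖y‖ := norm_pos_iff.mpr hy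
    have hyS : ‖y‖⁻¹ • y ∈ Metric.sphere (0 : Fin n → ℝ) 1 := by
      rw [mem_sphere_iff_norm, sub_zero, norm_smul, norm_inv, norm_norm]
      field_simp
    have h1 : a ⬝ᵥ (Q *ᵥ a) ≤ (‖y‖⁻¹ • y) ⬝ᵥ (Q *ᵥ (‖y‖⁻¹ • y)) := ha hyS
    have h2 : (‖y‖⁻¹ • y) ⬝ᵥ (P *ᵥ (‖y‖⁻¹ • y)) ≤ b ⬝ᵥ (P *ᵥ b) := hb hyS
    rw [smul_quad] at h1 h2
    have hn2 : (0:ℝ) < ‖y‖⁻¹^2 := by positivity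
    rw [div_mul_eq_mul_div, div_le_iff₀ hMP]
    nlinarith

theorem sqrtExp (t : ℝ) : Real.sqrt (Real.exp t) = Real.exp (t/2) := by
  rw [show Real.exp t = Real.exp (t/2) * Real.exp (t/2) by rw [← Real.exp_add, add_halves]]
  exact Real.sqrt_mul_self (Real.exp_nonneg _)

theorem gronwall_mono (hβ : 0 < β)
    (hQβ : ∀ y : Fin n → ℝ, β * (y ⬝ᵥ (P *ᵥ y)) ≤ y ⬝ᵥ ((P * G + Gᵀ * P) *ᵥ y))
    (x : Fin n → ℝ) :
    Monotone (fun u => Real.exp (-β*u) * qF G P x u) := by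
  have hD : ∀ u : ℝ, HasDerivAt (fun u => Real.exp (-β*u) * qF G P x u)
      ((-β) * (Real.exp (-β*u) * qF G P x u) + Real.exp (-β*u) *
        ((dilMat G u *ᵥ x) ⬝ᵥ ((P * G + Gᵀ * P) *ᵥ (dilMat G u *ᵥ x)))) u := by
    intro u
    have h1 : HasDerivAt (fun u : ℝ => Real.exp (-β*u)) (-β * Real.exp (-β*u)) u := by
      have := ((hasDerivAt_id u).const_mul (-β)).exp
      simpa [mul_comm] using this
    have h3 := h1.fun_mul (qF_hasDerivAt G P x u)
    refine h3.congr_deriv ?_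
    ring
  apply monotone_of_deriv_nonneg
  · exact fun u => (hD u).differentiableAt
  · intro u
    rw [(hD u).deriv]
    have h4 := hQβ (dilMat G u *ᵥ x)
    have h5 : qF G P x u = (dilMat G u *ᵥ x) ⬝ᵥ (P *ᵥ (dilMat G u *ᵥ x)) := rfl
    have h6 : (0:ℝ) < Real.exp (-β*u) := Real.exp_pos _
    have h7 := mul_le_mul_of_nonneg_left h4 h6.le
    rw [h5]
    nlinarith

theorem bwd_mono (hβ : 0 < β)
    (hQβ : ∀ y : Fin n → ℝ, β * (y ⬝ᵥ (P *ᵥ y)) ≤ y ⬝ᵥ ((P * G + Gᵀ * P) *ᵥ y))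
    {s : ℝ} (hs : s ≤ 0) (x : Fin n → ℝ) :
    Real.sqrt (qF G P x s) ≤ Real.exp (β/2 * s) * Real.sqrt (qF G P x 0) := by
  have h := gronwall_mono hβ hQβ x hs
  simp only [mul_zero, Real.exp_zero, one_mul] at h
  -- h : exp(-βs) * qF x s ≤ qF x 0
  have h2 : qF G P x s ≤ Real.exp (β*s) * qF G P x 0 := by
    have h3 : Real.exp (β*s) * (Real.exp (-β*s) * qF G P x s) ≤ Real.exp (β*s) * qF G P x 0 :=
      mul_le_mul_of_nonneg_left h (Real.exp_nonneg _)
    rw [← mul_assoc, ← Real.exp_add] at h3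
    simpa using h3
  calc Real.sqrt (qF G P x s) ≤ Real.sqrt (Real.exp (β*s) * qF G P x 0) := Real.sqrt_le_sqrt h2
    _ = Real.exp (β/2*s) * Real.sqrt (qF G P x 0) := by
        rw [Real.sqrt_mul (Real.exp_nonneg _), sqrtExp]
        ring_nf

theorem bwd_ge (hβ : 0 < β)
    (hQβ : ∀ y : Fin n → ℝ, β * (y ⬝ᵥ (P *ᵥ y)) ≤ y ⬝ᵥ ((P * G + Gᵀ * P) *ᵥ y))
    {s : ℝ} (hs : 0 ≤ s) (x : Fin n → ℝ) (hq : 0 ≤ qF G P x s) :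
    Real.exp (β/2 * s) * Real.sqrt (qF G P x 0) ≤ Real.sqrt (qF G P x s) := by
  have h := gronwall_mono hβ hQβ x hs
  simp only [mul_zero, Real.exp_zero, one_mul] at h
  -- h : qF x 0 ≤ exp(-βs) * qF x s
  have h2 : Real.exp (β*s) * qF G P x 0 ≤ qF G P x s := by
    have h3 := mul_le_mul_of_nonneg_left h (Real.exp_nonneg (β*s))
    rw [← mul_assoc, ← Real.exp_add] at h3
    simpa using h3
  calc Real.exp (β/2*s) * Real.sqrt (qF G P x 0)
      = Real.sqrt (Real.exp (β*s) * qF G P x 0) := by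
        rw [Real.sqrt_mul (Real.exp_nonneg _), sqrtExp]; ring_nf
    _ ≤ Real.sqrt (qF G P x s) := Real.sqrt_le_sqrt h2
end Bwd

/-- `d(s) = exp (s G_d)` is a dilation, strictly monotone with respect to
`‖·‖_P`, if and only if `P ≻ 0` and `P G_d + G_dᵀ P ≻ 0`. -/
theorem stmt0 {n : ℕ} (Gd P : Matrix (Fin n) (Fin n) ℝ) (hP : P.IsSymm) :
    ((∀ x : Fin n → ℝ, x ≠ 0 →
        Tendsto (fun s : ℝ => normP P (dilMat Gd s *ᵥ x)) atTop atTop ∧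
        Tendsto (fun s : ℝ => normP P (dilMat Gd s *ᵥ x)) atBot (𝓝 0)) ∧
      (∃ β : ℝ, 0 < β ∧ ∀ s : ℝ, s ≤ 0 → ∀ x : Fin n → ℝ,
        normP P (dilMat Gd s *ᵥ x) ≤ Real.exp (β * s) * normP P x)) ↔
    (P.PosDef ∧ (P * Gd + Gdᵀ * P).PosDef) := by
  constructor
  · rintro ⟨hlim, β, hβ, hmono'⟩
    have hmono : ∀ s ≤ (0:ℝ), ∀ x : Fin n → ℝ,
        Real.sqrt (qF Gd P x s) ≤ Real.exp (β*s) * Real.sqrt (qF Gd P x 0) := by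
      intro s hs x
      have h := hmono' s hs x
      rwa [normP_dil_eq, normP_eq_qF Gd P] at h
    have hlim' : ∀ x : Fin n → ℝ, x ≠ 0 →
        Tendsto (fun s => Real.sqrt (qF Gd P x s)) atTop atTop := fun x hx => (hlim x hx).1
    have hPpos := fwd_pos hlim' hβ hmono
    have hQpos := fwd_Qpos hPpos hβ hmono
    refine ⟨posDef_iff_dotProduct_mulVec.mpr ⟨?_, fun x hx => by simpa using hPpos x hx⟩,
      posDef_iff_dotProduct_mulVec.mpr ⟨?_, fun x hx => by simpa using hQpos x hx⟩⟩
    · rw [Matrix.IsHermitian, Matrix.conjTranspose_eq_transpose_of_trivial]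
      exact hP
    · rw [Matrix.IsHermitian, Matrix.conjTranspose_eq_transpose_of_trivial, transpose_add,
        transpose_mul, transpose_mul, transpose_transpose, hP.eq, add_comm]
  · rintro ⟨hPd, hQd⟩
    have hPpos : ∀ v : Fin n → ℝ, v ≠ 0 → 0 < v ⬝ᵥ (P *ᵥ v) := fun v hv => by
      simpa using hPd.dotProduct_mulVec_pos hv
    have hQpos : ∀ v : Fin n → ℝ, v ≠ 0 → 0 < v ⬝ᵥ ((P * Gd + Gdᵀ * P) *ᵥ v) := fun v hv => by
      simpa using hQd.dotProduct_mulVec_pos hv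
    obtain ⟨β, hβ, hQβ⟩ := exists_beta hPpos hQpos
    constructor
    · intro x hx
      have hq0 : 0 < qF Gd P x 0 := by rw [qF_zero]; exact hPpos x hx
      have hqpos : ∀ s : ℝ, 0 < qF Gd P x s := fun s =>
        hPpos _ (dilMat_mulVec_ne_zero Gd s hx)
      constructor
      · have hTend : Tendsto (fun s : ℝ => Real.exp (β/2*s) * Real.sqrt (qF Gd P x 0))
            atTop atTop := by
          apply Tendsto.atTop_mul_const (Real.sqrt_pos.mpr hq0)
          exact Real.tendsto_exp_atTop.comp (tendsto_id.const_mul_atTop (by positivity))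
        apply tendsto_atTop_mono' atTop ?_ hTend
        filter_upwards [eventually_ge_atTop (0:ℝ)] with s hs
        exact bwd_ge hβ hQβ hs x (hqpos s).le
      · refine tendsto_of_tendsto_of_tendsto_of_le_of_le' (g := fun _ => (0:ℝ))
          (h := fun s => Real.exp (β/2*s) * Real.sqrt (qF Gd P x 0))
          tendsto_const_nhds ?_ ?_ ?_
        · have h1 : Tendsto (fun s : ℝ => β/2*s) atBot atBot :=
            tendsto_id.const_mul_atBot (by positivity)
          have h2 := (Real.tendsto_exp_atBot.comp h1).mul_const (Real.sqrt (qF Gd P x 0))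
          simpa using h2
        · exact Eventually.of_forall fun s => Real.sqrt_nonneg _
        · filter_upwards [eventually_le_atBot (0:ℝ)] with s hs
          exact bwd_mono hβ hQβ hs x
    · refine ⟨β/2, by positivity, fun s hs x => ?_⟩
      have h := bwd_mono hβ hQβ hs x
      rwa [← normP_dil_eq, ← normP_eq_qF Gd P] at h
end

section
/- Let d(s) = exp(s·G_d) be a linear continuous dilation in ℝⁿ that is monotone with respect to a norm ‖·‖ on ℝⁿ. Then: (i) for every x ≠ 0 there exists a unique s_x ∈ ℝ such that ‖d(−s_x)x‖ = 1, so the canonical homogeneous norm ‖x‖_d := e^{s_x} for x ≠ 0, ‖0‖_d := 0, is a well-defined single-valued function; (ii) ‖·‖_d is continuous on ℝⁿ; (iii) there exist functions σ₁, σ₂ of class K_∞ such that σ₁(‖x‖_d) ≤ ‖x‖ ≤ σ₂(‖x‖_d) for all x ∈ ℝⁿ. -/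
open Matrix Filter Topology Set

/-- `N` is a norm on `ℝⁿ`. -/
def IsNorm {n : ℕ} (N : (Fin n → ℝ) → ℝ) : Prop :=
  (∀ x y : Fin n → ℝ, N (x + y) ≤ N x + N y) ∧
  (∀ (c : ℝ) (x : Fin n → ℝ), N (c • x) = |c| * N x) ∧
  (∀ x : Fin n → ℝ, N x = 0 ↔ x = 0)

/-- `d(s) = exp (s G)` is a dilation with respect to the norm `N`:
`liminf_{s→∞} ‖d(s)x‖ = ∞` and `limsup_{s→-∞} ‖d(s)x‖ = 0` for every `x ≠ 0`. -/
def IsDilation {n : ℕ} (G : Matrix (Fin n) (Fin n) ℝ) (N : (Fin n → ℝ) → ℝ) : Prop :=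
  ∀ x : Fin n → ℝ, x ≠ 0 →
    Tendsto (fun s : ℝ => N (dilMat G s *ᵥ x)) atTop atTop ∧
    Tendsto (fun s : ℝ => N (dilMat G s *ᵥ x)) atBot (𝓝 0)

/-- The dilation is monotone with respect to `N`: `s ↦ ‖d(s)x‖` is strictly increasing. -/
def IsMonotoneDil {n : ℕ} (G : Matrix (Fin n) (Fin n) ℝ) (N : (Fin n → ℝ) → ℝ) : Prop :=
  ∀ x : Fin n → ℝ, x ≠ 0 → StrictMono fun s : ℝ => N (dilMat G s *ᵥ x)

/-- A class `K_∞` function: continuous, strictly increasing on `[0,∞)`, vanishing at `0`,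
and tending to `+∞`. -/
def IsClassKInf (σ : ℝ → ℝ) : Prop :=
  ContinuousOn σ (Set.Ici 0) ∧ StrictMonoOn σ (Set.Ici 0) ∧ σ 0 = 0 ∧
    Tendsto σ atTop atTop

namespace Stmt1Aux

/-- `i`-th standard basis vector. -/
def bv {n : ℕ} (i : Fin n) : Fin n → ℝ := Pi.single i 1

lemma bv_ne_zero {n : ℕ} (i : Fin n) : bv i ≠ 0 := by
  intro h
  have := congrFun h i
  rw [bv, Pi.single_eq_same, Pi.zero_apply] at this
  exact one_ne_zero this

variable {n : ℕ} {N : (Fin n → ℝ) → ℝ}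

lemma dil_add (G : Matrix (Fin n) (Fin n) ℝ) (s t : ℝ) :
    dilMat G (s + t) = dilMat G s * dilMat G t := by
  unfold dilMat
  rw [add_smul]
  exact Matrix.exp_add_of_commute _ _ (((Commute.refl G).smul_left s).smul_right t)

lemma dil_zero (G : Matrix (Fin n) (Fin n) ℝ) : dilMat G 0 = 1 := by
  unfold dilMat; rw [zero_smul]; exact NormedSpace.exp_zero

lemma dil_cancel (G : Matrix (Fin n) (Fin n) ℝ) (s : ℝ) (x : Fin n → ℝ) :
    dilMat G s *ᵥ (dilMat G (-s) *ᵥ x) = x := by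
  rw [Matrix.mulVec_mulVec, ← dil_add, add_neg_cancel, dil_zero, Matrix.one_mulVec]

lemma dil_cancel' (G : Matrix (Fin n) (Fin n) ℝ) (s : ℝ) (x : Fin n → ℝ) :
    dilMat G (-s) *ᵥ (dilMat G s *ᵥ x) = x := by
  have := dil_cancel G (-s) x; rwa [neg_neg] at this

lemma dil_cont_left (G : Matrix (Fin n) (Fin n) ℝ) (x : Fin n → ℝ) :
    Continuous fun s : ℝ => dilMat G s *ᵥ x := by
  letI : SeminormedRing (Matrix (Fin n) (Fin n) ℝ) := Matrix.linftyOpSemiNormedRing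
  letI : NormedRing (Matrix (Fin n) (Fin n) ℝ) := Matrix.linftyOpNormedRing
  letI : NormedAlgebra ℝ (Matrix (Fin n) (Fin n) ℝ) := Matrix.linftyOpNormedAlgebra
  letI : NormedAlgebra ℚ (Matrix (Fin n) (Fin n) ℝ) := NormedAlgebra.restrictScalars ℚ ℝ _
  have h1 : Continuous fun s : ℝ => dilMat G s :=
    NormedSpace.exp_continuous.comp (continuous_id.smul continuous_const)
  exact h1.matrix_mulVec continuous_const

lemma dil_cont_right (G : Matrix (Fin n) (Fin n) ℝ) (t : ℝ) :
    Continuous fun x : Fin n → ℝ => dilMat G t *ᵥ x :=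
  continuous_const.matrix_mulVec continuous_id

lemma dil_ne_zero (G : Matrix (Fin n) (Fin n) ℝ) (s : ℝ) {x : Fin n → ℝ} (hx : x ≠ 0) :
    dilMat G s *ᵥ x ≠ 0 := by
  intro h
  apply hx
  have := dil_cancel' G s x
  rw [h, Matrix.mulVec_zero] at this
  exact this.symm

lemma N_zero (hN : IsNorm N) : N 0 = 0 := (hN.2.2 0).mpr rfl

lemma N_nonneg (hN : IsNorm N) (x : Fin n → ℝ) : 0 ≤ N x := by
  have h1 : N (-x) = N x := by
    have := hN.2.1 (-1) x; simpa using this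
  have h2 : N (x + (-x)) ≤ N x + N (-x) := hN.1 x (-x)
  rw [add_neg_cancel, N_zero hN, h1] at h2
  linarith

lemma N_pos (hN : IsNorm N) {x : Fin n → ℝ} (hx : x ≠ 0) : 0 < N x :=
  lt_of_le_of_ne (N_nonneg hN x) (fun h => hx ((hN.2.2 x).mp h.symm))

lemma N_sum_le (hN : IsNorm N) {ι : Type*} (s : Finset ι) (f : ι → (Fin n → ℝ)) :
    N (∑ i ∈ s, f i) ≤ ∑ i ∈ s, N (f i) := by
  classical
  induction s using Finset.induction with
  | empty => simp [N_zero hN]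
  | insert _ _ h ih =>
    rw [Finset.sum_insert h, Finset.sum_insert h]
    exact le_trans (hN.1 _ _) (add_le_add_right ih _)

lemma pi_decomp (x : Fin n → ℝ) : x = ∑ i, x i • bv i := by
  funext j
  simp [Finset.sum_apply, bv, Pi.single_apply]

lemma mulVec_decomp (A : Matrix (Fin n) (Fin n) ℝ) (x : Fin n → ℝ) :
    A *ᵥ x = ∑ i, x i • (A *ᵥ bv i) := by
  have h : A *ᵥ x = A.mulVecLin x := rfl
  rw [h]
  conv_lhs => rw [pi_decomp x]
  rw [map_sum]
  refine Finset.sum_congr rfl fun i _ => ?_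
  rw [LinearMap.map_smul]
  rfl

lemma N_le_sum (hN : IsNorm N) (x : Fin n → ℝ) :
    N x ≤ (∑ i, N (bv i)) * ‖x‖ := by
  calc N x = N (∑ i, x i • bv i) := by rw [← pi_decomp]
    _ ≤ ∑ i, N (x i • bv i) := N_sum_le hN _ _
    _ = ∑ i, |x i| * N (bv i) := by simp [hN.2.1]
    _ ≤ ∑ i, ‖x‖ * N (bv i) := by
        refine Finset.sum_le_sum fun i _ => ?_
        exact mul_le_mul_of_nonneg_right (by simpa using norm_le_pi_norm x i)
          (N_nonneg hN _)
    _ = (∑ i, N (bv i)) * ‖x‖ := by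
        rw [Finset.sum_mul]
        exact Finset.sum_congr rfl fun i _ => mul_comm _ _

lemma N_cont (hN : IsNorm N) : Continuous N := by
  set C := ∑ i, N (bv (n := n) i) with hC
  have hC0 : 0 ≤ C := Finset.sum_nonneg fun i _ => N_nonneg hN _
  rw [Metric.continuous_iff]
  intro x ε hε
  refine ⟨ε / (C + 1), by positivity, fun y hy => ?_⟩
  have key : ∀ a b : Fin n → ℝ, N a - N b ≤ N (a - b) := by
    intro a b
    have := hN.1 (a - b) b
    rw [sub_add_cancel] at this
    linarith
  have hnege : N (x - y) = N (y - x) := by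
    have := hN.2.1 (-1) (y - x); simpa [neg_sub] using this
  have habs : |N y - N x| ≤ N (y - x) := by
    rw [abs_sub_le_iff]
    exact ⟨key y x, hnege ▸ key x y⟩
  have hb : N (y - x) ≤ C * dist y x := by
    rw [dist_eq_norm]; exact N_le_sum hN _
  calc dist (N y) (N x) = |N y - N x| := Real.dist_eq _ _
    _ ≤ C * dist y x := habs.trans hb
    _ ≤ C * (ε / (C + 1)) := mul_le_mul_of_nonneg_left hy.le hC0
    _ < (C + 1) * (ε / (C + 1)) := by
        have h0 : (0:ℝ) < ε / (C + 1) := by positivity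
        exact mul_lt_mul_of_pos_right (lt_add_one C) h0
    _ = ε := by field_simp

lemma norm_le_K (hN : IsNorm N) (hn : 0 < n) :
    ∃ K : ℝ, 0 < K ∧ ∀ x : Fin n → ℝ, ‖x‖ ≤ K * N x := by
  haveI : Nonempty (Fin n) := Fin.pos_iff_nonempty.mp hn
  have hsc : IsCompact (Metric.sphere (0 : Fin n → ℝ) 1) := isCompact_sphere 0 1
  have hsn : (Metric.sphere (0 : Fin n → ℝ) 1).Nonempty :=
    NormedSpace.sphere_nonempty.mpr zero_le_one
  obtain ⟨y0, hy0, hmin⟩ := hsc.exists_isMinOn hsn ((N_cont hN).continuousOn)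
  have hy0ne : y0 ≠ 0 := by
    intro h
    rw [h, mem_sphere_zero_iff_norm, norm_zero] at hy0
    exact one_ne_zero hy0.symm
  have hc : 0 < N y0 := N_pos hN hy0ne
  refine ⟨(N y0)⁻¹, by positivity, fun x => ?_⟩
  rcases eq_or_ne x 0 with rfl | hx
  · simp [N_zero hN]
  · have hxn : (0:ℝ) < ‖x‖ := norm_pos_iff.mpr hx
    have hmem : ‖x‖⁻¹ • x ∈ Metric.sphere (0 : Fin n → ℝ) 1 := by
      rw [mem_sphere_zero_iff_norm, norm_smul, norm_inv, norm_norm]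
      field_simp
    have h1 : N y0 ≤ N (‖x‖⁻¹ • x) := hmin hmem
    rw [hN.2.1, abs_inv, abs_norm] at h1
    have h3 : (0:ℝ) ≤ (N y0)⁻¹ * ‖x‖ * (‖x‖⁻¹ * N x - N y0) :=
      mul_nonneg (by positivity) (by linarith)
    have hx' : ‖x‖⁻¹ * ‖x‖ = 1 := inv_mul_cancel₀ hxn.ne'
    have hy' : (N y0)⁻¹ * N y0 = 1 := inv_mul_cancel₀ hc.ne'
    nlinarith [h3]

/-- Generic construction of a class `K_∞` function from data on `(0, ∞)`. -/
lemma classKInf_of (g : ℝ → ℝ) (hg : ∀ r : ℝ, 0 < r → ContinuousAt g r)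
    (h0 : Tendsto g (𝓝[>] (0:ℝ)) (𝓝 0))
    (hm : ∀ a b : ℝ, 0 < a → a < b → g a < g b)
    (hpos : ∀ r : ℝ, 0 < r → 0 < g r)
    (htop : Tendsto g atTop atTop) :
    IsClassKInf (fun r => if r ≤ 0 then r else g r) := by
  set F : ℝ → ℝ := fun r => if r ≤ 0 then r else g r with hF
  have hF0 : F 0 = 0 := by simp [hF]
  have hFg : ∀ r : ℝ, 0 < r → F r = g r := fun r hr => if_neg (not_le.mpr hr)
  refine ⟨?_, ?_, hF0, ?_⟩
  · -- continuity on Ici 0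
    intro r hr
    rcases eq_or_lt_of_le (mem_Ici.mp hr) with h | h
    · -- at 0
      subst h
      rw [ContinuousWithinAt, hF0]
      rw [show Ici (0:ℝ) = insert 0 (Ioi 0) from Set.Ioi_insert.symm,
        nhdsWithin_insert]
      rw [tendsto_sup]
      constructor
      · have := tendsto_pure_nhds F 0
        rwa [hF0] at this
      · refine h0.congr' ?_
        filter_upwards [self_mem_nhdsWithin] with t ht
        exact (hFg t ht).symm
    · -- at r > 0
      have ev : g =ᶠ[𝓝 r] F := by
        filter_upwards [Ioi_mem_nhds h] with t ht
        exact (hFg t ht).symm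
      exact ((hg r h).congr ev).continuousWithinAt
  · -- strict mono on Ici 0
    intro a ha b hb hab
    rcases eq_or_lt_of_le (mem_Ici.mp ha) with h | h
    · rw [← h, hF0, hFg b (by linarith [mem_Ici.mp ha])]
      exact hpos b (by linarith)
    · rw [hFg a h, hFg b (h.trans hab)]
      exact hm a b h hab
  · refine htop.congr' ?_
    filter_upwards [eventually_gt_atTop (0:ℝ)] with t ht
    exact (hFg t ht).symm

end Stmt1Aux

/-- for a monotone linear continuous dilation, the canonical homogeneous norm
is well defined (unique `s_x` with `‖d(-s_x)x‖ = 1`), continuous, and bounded above and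
below by class `K_∞` functions of the original norm. -/
theorem stmt1 {n : ℕ} (G : Matrix (Fin n) (Fin n) ℝ) (N : (Fin n → ℝ) → ℝ)
    (hN : IsNorm N) (hdil : IsDilation G N) (hmono : IsMonotoneDil G N) :
    (∀ x : Fin n → ℝ, x ≠ 0 → ∃! s : ℝ, N (dilMat G (-s) *ᵥ x) = 1) ∧
    (∀ hd : (Fin n → ℝ) → ℝ, hd 0 = 0 →
      (∀ x : Fin n → ℝ, x ≠ 0 → 0 < hd x ∧ N (dilMat G (-Real.log (hd x)) *ᵥ x) = 1) →
      Continuous hd ∧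
      ∃ σ₁ σ₂ : ℝ → ℝ, IsClassKInf σ₁ ∧ IsClassKInf σ₂ ∧
        ∀ x : Fin n → ℝ, σ₁ (hd x) ≤ N x ∧ N x ≤ σ₂ (hd x)) := by
  classical
  have fcont : ∀ x : Fin n → ℝ, Continuous fun s : ℝ => N (dilMat G s *ᵥ x) := fun x =>
    (Stmt1Aux.N_cont hN).comp (Stmt1Aux.dil_cont_left G x)
  have gcont : ∀ t : ℝ, Continuous fun x : Fin n → ℝ => N (dilMat G (-t) *ᵥ x) := fun t =>
    (Stmt1Aux.N_cont hN).comp (Stmt1Aux.dil_cont_right G (-t))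
  have part1 : ∀ x : Fin n → ℝ, x ≠ 0 → ∃! s : ℝ, N (dilMat G (-s) *ᵥ x) = 1 := by
    intro x hx
    obtain ⟨htop, hbot⟩ := hdil x hx
    obtain ⟨a, ha⟩ := (hbot.eventually_lt_const one_pos).exists
    obtain ⟨b, hb⟩ := (htop.eventually (eventually_gt_atTop 1)).exists
    have hab : a < b := (hmono x hx).lt_iff_lt.mp (ha.trans hb)
    have h1m : (1:ℝ) ∈ Set.Icc (N (dilMat G a *ᵥ x)) (N (dilMat G b *ᵥ x)) := ⟨ha.le, hb.le⟩
    obtain ⟨s, -, hs⟩ := intermediate_value_Icc hab.le ((fcont x).continuousOn) h1m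
    have hs' : N (dilMat G s *ᵥ x) = 1 := hs
    refine ⟨-s, ?_, fun t ht => ?_⟩
    · show N (dilMat G (- -s) *ᵥ x) = 1
      rwa [neg_neg]
    · have ht' : N (dilMat G (-t) *ᵥ x) = 1 := ht
      have h2 : N (dilMat G (-t) *ᵥ x) = N (dilMat G s *ᵥ x) := ht'.trans hs'.symm
      have h3 : -t = s := (hmono x hx).injective h2
      linarith
  refine ⟨part1, fun hd hd0 hdp => ?_⟩
  have hanti : ∀ x : Fin n → ℝ, x ≠ 0 →
      StrictAnti fun t : ℝ => N (dilMat G (-t) *ᵥ x) := fun x hx =>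
    (hmono x hx).comp_strictAnti fun a b h => neg_lt_neg h
  have charlt : ∀ (x : Fin n → ℝ), x ≠ 0 → ∀ t : ℝ,
      (N (dilMat G (-t) *ᵥ x) < 1 ↔ Real.log (hd x) < t) := by
    intro x hx t
    have h1 := (hdp x hx).2
    rw [← h1]
    exact (hanti x hx).lt_iff_gt
  have chargt : ∀ (x : Fin n → ℝ), x ≠ 0 → ∀ t : ℝ,
      (1 < N (dilMat G (-t) *ᵥ x) ↔ t < Real.log (hd x)) := by
    intro x hx t
    have h1 := (hdp x hx).2
    rw [← h1]
    exact (hanti x hx).lt_iff_gt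
  -- continuity of hd
  have hcA : ∀ x₀ : Fin n → ℝ, x₀ ≠ 0 → ContinuousAt hd x₀ := by
    intro x₀ hx₀
    have hpos₀ := (hdp x₀ hx₀).1
    set s₀ := Real.log (hd x₀) with hs₀
    have hlog : Tendsto (fun x => Real.log (hd x)) (𝓝 x₀) (𝓝 s₀) := by
      rw [Metric.tendsto_nhds]
      intro ε hε
      have e1 : N (dilMat G (-(s₀ + ε)) *ᵥ x₀) < 1 :=
        (charlt x₀ hx₀ _).mpr (by rw [← hs₀]; linarith)
      have e2 : 1 < N (dilMat G (-(s₀ - ε)) *ᵥ x₀) :=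
        (chargt x₀ hx₀ _).mpr (by rw [← hs₀]; linarith)
      have u1 : ∀ᶠ x in 𝓝 x₀, N (dilMat G (-(s₀ + ε)) *ᵥ x) < 1 :=
        ((gcont _).tendsto x₀).eventually_lt_const e1
      have u2 : ∀ᶠ x in 𝓝 x₀, 1 < N (dilMat G (-(s₀ - ε)) *ᵥ x) :=
        ((gcont _).tendsto x₀).eventually_const_lt e2
      filter_upwards [u1, u2] with x h1 h2
      have hx : x ≠ 0 := by
        rintro rfl
        rw [Matrix.mulVec_zero, Stmt1Aux.N_zero hN] at h2
        linarith
      have l1 : Real.log (hd x) < s₀ + ε := (charlt x hx _).mp h1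
      have l2 : s₀ - ε < Real.log (hd x) := (chargt x hx _).mp h2
      rw [Real.dist_eq, abs_sub_lt_iff]
      constructor <;> linarith
    have hexp : Tendsto (fun x => Real.exp (Real.log (hd x))) (𝓝 x₀) (𝓝 (Real.exp s₀)) :=
      (Real.continuous_exp.tendsto _).comp hlog
    have heq : (fun x => Real.exp (Real.log (hd x))) =ᶠ[𝓝 x₀] hd := by
      filter_upwards [eventually_ne_nhds hx₀] with x hx
      exact Real.exp_log (hdp x hx).1
    have hT : Tendsto hd (𝓝 x₀) (𝓝 (Real.exp s₀)) := hexp.congr' heq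
    rw [Real.exp_log hpos₀] at hT
    exact hT
  have hc0 : ContinuousAt hd 0 := by
    rw [ContinuousAt, hd0, Metric.tendsto_nhds]
    intro ε hε
    have e0 : N (dilMat G (-Real.log ε) *ᵥ (0 : Fin n → ℝ)) < 1 := by
      rw [Matrix.mulVec_zero, Stmt1Aux.N_zero hN]; norm_num
    have u0 : ∀ᶠ x in 𝓝 (0 : Fin n → ℝ), N (dilMat G (-Real.log ε) *ᵥ x) < 1 :=
      ((gcont _).tendsto 0).eventually_lt_const e0
    filter_upwards [u0] with x h1
    rw [Real.dist_eq, sub_zero]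
    rcases eq_or_ne x 0 with rfl | hx
    · rw [hd0, abs_zero]; exact hε
    · have hlt := (charlt x hx _).mp h1
      rw [abs_of_pos (hdp x hx).1]
      calc hd x = Real.exp (Real.log (hd x)) := (Real.exp_log (hdp x hx).1).symm
        _ < Real.exp (Real.log ε) := Real.exp_lt_exp.mpr hlt
        _ = ε := Real.exp_log hε
  have hcont : Continuous hd := by
    rw [continuous_iff_continuousAt]
    intro x
    rcases eq_or_ne x 0 with rfl | hx
    · exact hc0
    · exact hcA x hx
  refine ⟨hcont, ?_⟩
  rcases Nat.eq_zero_or_pos n with hn0 | hn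
  · -- degenerate case n = 0
    subst hn0
    have hid : IsClassKInf id := ⟨continuous_id.continuousOn, fun a _ b _ h => h, rfl, tendsto_id⟩
    refine ⟨id, id, hid, hid, fun x => ?_⟩
    have hx0 : x = 0 := Subsingleton.elim x 0
    rw [hx0, hd0, Stmt1Aux.N_zero hN]
    exact ⟨le_of_eq rfl, le_of_eq rfl⟩
  · obtain ⟨K, hK, hKle⟩ := Stmt1Aux.norm_le_K hN hn
    haveI : Nonempty (Fin n) := Fin.pos_iff_nonempty.mp hn
    set ψ : ℝ → ℝ := fun t => ∑ i, N (dilMat G t *ᵥ Stmt1Aux.bv i) with hψ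
    have ψpos : ∀ t, 0 < ψ t := fun t =>
      Finset.sum_pos
        (fun i _ => Stmt1Aux.N_pos hN (Stmt1Aux.dil_ne_zero G t (Stmt1Aux.bv_ne_zero i)))
        Finset.univ_nonempty
    have ψcont : Continuous ψ := continuous_finset_sum _ fun i _ => fcont _
    have ψmono : StrictMono ψ := fun a b hab =>
      Finset.sum_lt_sum_of_nonempty Finset.univ_nonempty fun i _ =>
        hmono _ (Stmt1Aux.bv_ne_zero i) hab
    have ψbot : Tendsto ψ atBot (𝓝 0) := by
      have h := tendsto_finset_sum (Finset.univ : Finset (Fin n))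
        (fun i _ => (hdil _ (Stmt1Aux.bv_ne_zero i)).2)
      simpa using h
    have ψtop : Tendsto ψ atTop atTop := by
      refine tendsto_atTop_mono (fun t => ?_)
        ((hdil _ (Stmt1Aux.bv_ne_zero (⟨0, hn⟩ : Fin n))).1)
      simp only [hψ]
      exact Finset.single_le_sum (f := fun i => N (dilMat G t *ᵥ Stmt1Aux.bv i))
        (fun i _ => Stmt1Aux.N_nonneg hN _) (Finset.mem_univ (⟨0, hn⟩ : Fin n))
    have bound : ∀ (t : ℝ) (x : Fin n → ℝ), N (dilMat G t *ᵥ x) ≤ ‖x‖ * ψ t := by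
      intro t x
      calc N (dilMat G t *ᵥ x)
          = N (∑ i, x i • (dilMat G t *ᵥ Stmt1Aux.bv i)) := by
            rw [← Stmt1Aux.mulVec_decomp]
        _ ≤ ∑ i, N (x i • (dilMat G t *ᵥ Stmt1Aux.bv i)) := Stmt1Aux.N_sum_le hN _ _
        _ = ∑ i, |x i| * N (dilMat G t *ᵥ Stmt1Aux.bv i) := by simp [hN.2.1]
        _ ≤ ∑ i, ‖x‖ * N (dilMat G t *ᵥ Stmt1Aux.bv i) :=
            Finset.sum_le_sum fun i _ =>
              mul_le_mul_of_nonneg_right (by simpa using norm_le_pi_norm x i)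
                (Stmt1Aux.N_nonneg hN _)
        _ = ‖x‖ * ψ t := by rw [hψ, Finset.mul_sum]
    -- the two class K∞ functions
    refine ⟨fun r => if r ≤ 0 then r else (K * ψ (-Real.log r))⁻¹,
      fun r => if r ≤ 0 then r else K * ψ (Real.log r), ?_, ?_, ?_⟩
    · -- σ₁ is class K∞
      refine Stmt1Aux.classKInf_of _ ?_ ?_ ?_ ?_ ?_
      · intro r hr
        exact (continuousAt_const.mul (ψcont.continuousAt.comp
          ((Real.continuousAt_log hr.ne').neg))).inv₀ (mul_pos hK (ψpos _)).ne'
      · have hin : Tendsto (fun r : ℝ => K * ψ (-Real.log r)) (𝓝[>] (0:ℝ)) atTop := by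
          have h1 : Tendsto (fun r : ℝ => -Real.log r) (𝓝[>] (0:ℝ)) atTop :=
            tendsto_neg_atBot_atTop.comp Real.tendsto_log_nhdsGT_zero
          exact (ψtop.comp h1).const_mul_atTop hK
        exact hin.inv_tendsto_atTop
      · intro a b ha hab
        have hlt : K * ψ (-Real.log b) < K * ψ (-Real.log a) :=
          mul_lt_mul_of_pos_left (ψmono (neg_lt_neg (Real.log_lt_log ha hab))) hK
        exact inv_strictAnti₀ (mul_pos hK (ψpos _)) hlt
      · intro r hr
        exact inv_pos.mpr (mul_pos hK (ψpos _))
      · have h1 : Tendsto (fun r : ℝ => K * ψ (-Real.log r)) atTop (𝓝 0) := by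
          have h2 : Tendsto (fun r : ℝ => -Real.log r) atTop atBot :=
            tendsto_neg_atTop_atBot.comp Real.tendsto_log_atTop
          have h3 := (ψbot.comp h2).const_mul K
          simpa using h3
        have h4 : Tendsto (fun r : ℝ => K * ψ (-Real.log r)) atTop (𝓝[>] (0:ℝ)) :=
          tendsto_nhdsWithin_of_tendsto_nhds_of_eventually_within _ h1
            (Eventually.of_forall fun r => mul_pos hK (ψpos _))
        exact h4.inv_tendsto_nhdsGT_zero
    · -- σ₂ is class K∞
      refine Stmt1Aux.classKInf_of _ ?_ ?_ ?_ ?_ ?_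
      · intro r hr
        exact continuousAt_const.mul (ψcont.continuousAt.comp (Real.continuousAt_log hr.ne'))
      · have h1 := (ψbot.comp Real.tendsto_log_nhdsGT_zero).const_mul K
        simpa using h1
      · intro a b ha hab
        exact mul_lt_mul_of_pos_left (ψmono (Real.log_lt_log ha hab)) hK
      · intro r hr
        exact mul_pos hK (ψpos _)
      · exact (ψtop.comp Real.tendsto_log_atTop).const_mul_atTop hK
    · -- the bounds
      intro x
      rcases eq_or_ne x 0 with rfl | hx
      · rw [hd0]
        simp [Stmt1Aux.N_zero hN]
      · have hpos := (hdp x hx).1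
        have hs := (hdp x hx).2
        set s := Real.log (hd x) with hsdef
        have hif : ¬ hd x ≤ 0 := not_le.mpr hpos
        constructor
        · have hb1 := bound (-s) x
          rw [hs] at hb1
          have h2 : ‖x‖ ≤ K * N x := hKle x
          have h3 : (1:ℝ) ≤ (K * ψ (-s)) * N x := by
            nlinarith [ψpos (-s), Stmt1Aux.N_nonneg hN x, norm_nonneg x]
          simp only [if_neg hif]
          rw [← hsdef]
          calc (K * ψ (-s))⁻¹ = (K * ψ (-s))⁻¹ * 1 := (mul_one _).symm
            _ ≤ (K * ψ (-s))⁻¹ * ((K * ψ (-s)) * N x) := by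
                refine mul_le_mul_of_nonneg_left h3 ?_
                exact inv_nonneg.mpr (mul_pos hK (ψpos _)).le
            _ = N x := inv_mul_cancel_left₀ (mul_pos hK (ψpos _)).ne' (N x)
        · have hxy : x = dilMat G s *ᵥ (dilMat G (-s) *ᵥ x) := (Stmt1Aux.dil_cancel G s x).symm
          have h1 : N x ≤ ‖dilMat G (-s) *ᵥ x‖ * ψ s := by
            conv_lhs => rw [hxy]
            exact bound s _
          have h2 : ‖dilMat G (-s) *ᵥ x‖ ≤ K := by
            have h := hKle (dilMat G (-s) *ᵥ x)
            rwa [hs, mul_one] at h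
          simp only [if_neg hif]
          rw [← hsdef]
          calc N x ≤ ‖dilMat G (-s) *ᵥ x‖ * ψ s := h1
            _ ≤ K * ψ s := mul_le_mul_of_nonneg_right h2 (ψpos s).le
end

section
/- Let A ∈ ℝ^{n×n}, B ∈ ℝ^{n×m}, G₀ ∈ ℝ^{n×n}, Y₀ ∈ ℝ^{m×n} satisfy A·G₀ + B·Y₀ = G₀·A + A and G₀·B = 0, and assume G₀ − I_n is invertible. Let K₀ = Y₀·(G₀ − I_n)^{−1}, μ ∈ ℝ, G_d = I_n + μ·G₀, and A₀ = A + B·K₀. Then: (i) A₀·G_d = (G_d + μ·I_n)·A₀; (ii) A₀·exp(s·G_d) = e^{μs}·exp(s·G_d)·A₀ for all s ∈ ℝ (i.e., the linear vector field x ↦ A₀x is d-homogeneous of degree μ for d(s) = exp(s·G_d)); and (iii) exp(s·G_d)·B = e^{s}·B for all s ∈ ℝ. -/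
open Matrix

open NormedSpace in
private lemma my_semiconj_exp {𝔸 : Type*} [NormedRing 𝔸] [NormedAlgebra ℝ 𝔸] [CompleteSpace 𝔸]
    {a x y : 𝔸} (h : a * x = y * a) : a * exp x = exp y * a := by
  have hpow : ∀ k : ℕ, a * x ^ k = y ^ k * a := by
    intro k
    induction k with
    | zero => simp
    | succ k ih => rw [pow_succ, ← mul_assoc, ih, mul_assoc, h, ← mul_assoc, ← pow_succ]
  rw [exp_eq_tsum ℝ, ← (expSeries_summable' (𝕂 := ℝ) (x := x)).tsum_mul_left a,
    ← (expSeries_summable' (𝕂 := ℝ) (x := y)).tsum_mul_right a]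
  congr 1
  funext k
  rw [mul_smul_comm, smul_mul_assoc, hpow]

/-- homogenization of a linear plant: if `A G₀ + B Y₀ = G₀ A + A`,
`G₀ B = 0`, `K₀ = Y₀ (G₀ − I)⁻¹`, `G_d = I + μ G₀` and `A₀ = A + B K₀`, then
`A₀ G_d = (G_d + μ I) A₀`, the field `x ↦ A₀ x` is `d`-homogeneous of degree `μ`
(`A₀ e^{sG_d} = e^{μs} e^{sG_d} A₀`), and `e^{sG_d} B = e^{s} B`. -/
theorem stmt15 {n m : ℕ} (A G₀ : Matrix (Fin n) (Fin n) ℝ)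
    (B : Matrix (Fin n) (Fin m) ℝ) (Y₀ : Matrix (Fin m) (Fin n) ℝ)
    (hG0Y0 : A * G₀ + B * Y₀ = G₀ * A + A) (hG0B : G₀ * B = 0)
    (hinv : IsUnit (G₀ - 1)) (μ : ℝ)
    (K₀ : Matrix (Fin m) (Fin n) ℝ) (hK₀ : K₀ = Y₀ * (G₀ - 1)⁻¹)
    (Gd : Matrix (Fin n) (Fin n) ℝ) (hGd : Gd = 1 + μ • G₀)
    (A₀ : Matrix (Fin n) (Fin n) ℝ) (hA₀ : A₀ = A + B * K₀) :
    A₀ * Gd = (Gd + μ • (1 : Matrix (Fin n) (Fin n) ℝ)) * A₀ ∧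
    (∀ s : ℝ, A₀ * NormedSpace.exp (s • Gd) =
      Real.exp (μ * s) • (NormedSpace.exp (s • Gd) * A₀)) ∧
    (∀ s : ℝ, NormedSpace.exp (s • Gd) * B = Real.exp s • B) := by
  letI : SeminormedRing (Matrix (Fin n) (Fin n) ℝ) := Matrix.linftyOpSemiNormedRing
  letI : NormedRing (Matrix (Fin n) (Fin n) ℝ) := Matrix.linftyOpNormedRing
  letI : NormedAlgebra ℝ (Matrix (Fin n) (Fin n) ℝ) := Matrix.linftyOpNormedAlgebra
  -- key: B * K₀ * (G₀ - 1) = B * Y₀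
  have hdet : IsUnit (G₀ - 1).det := (Matrix.isUnit_iff_isUnit_det _).mp hinv
  have hBK : B * K₀ * (G₀ - 1) = B * Y₀ := by
    rw [hK₀, ← Matrix.mul_assoc, Matrix.mul_assoc (B * Y₀), Matrix.nonsing_inv_mul _ hdet,
      Matrix.mul_one]
  have hkey : A₀ * G₀ = G₀ * A₀ + A₀ := by
    have h1 : B * K₀ * G₀ = B * Y₀ + B * K₀ := by
      have := hBK
      rw [Matrix.mul_sub, Matrix.mul_one, sub_eq_iff_eq_add] at this
      exact this
    rw [hA₀, Matrix.add_mul, h1, Matrix.mul_add, ← Matrix.mul_assoc G₀ B K₀, hG0B,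
      Matrix.zero_mul, add_zero, ← add_assoc, hG0Y0]
    abel
  have h1 : A₀ * Gd = (Gd + μ • (1 : Matrix (Fin n) (Fin n) ℝ)) * A₀ := by
    rw [hGd, Matrix.mul_add, Matrix.mul_one, Matrix.add_mul, Matrix.add_mul,
      Matrix.mul_smul, hkey, Matrix.smul_mul, Matrix.smul_mul, Matrix.one_mul, smul_add]
    abel
  have hGdB : Gd * B = B := by
    rw [hGd, Matrix.add_mul, Matrix.one_mul, Matrix.smul_mul, hG0B, smul_zero, add_zero]
  refine ⟨h1, ?_, ?_⟩
  · intro s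
    have hx : A₀ * (s • Gd) = (s • Gd + (μ * s) • (1 : Matrix (Fin n) (Fin n) ℝ)) * A₀ := by
      rw [Matrix.mul_smul, h1, Matrix.add_mul, Matrix.add_mul, Matrix.smul_mul,
        Matrix.smul_mul, Matrix.smul_mul, smul_add, smul_smul, mul_comm s μ]
    rw [show A₀ * NormedSpace.exp (s • Gd) = NormedSpace.exp (s • Gd + (μ * s) • (1 : Matrix (Fin n) (Fin n) ℝ)) * A₀ from
      my_semiconj_exp hx]
    have hc : Commute (s • Gd) ((μ * s) • (1 : Matrix (Fin n) (Fin n) ℝ)) :=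
      ((Commute.one_right Gd).smul_left s).smul_right (μ * s)
    rw [Matrix.exp_add_of_commute _ _ hc]
    have he : NormedSpace.exp ((μ * s) • (1 : Matrix (Fin n) (Fin n) ℝ))
        = Real.exp (μ * s) • (1 : Matrix (Fin n) (Fin n) ℝ) := by
      rw [← Algebra.algebraMap_eq_smul_one, show NormedSpace.exp (algebraMap ℝ (Matrix (Fin n) (Fin n) ℝ) (μ * s))
          = algebraMap ℝ (Matrix (Fin n) (Fin n) ℝ) (NormedSpace.exp (μ * s)) from
          (NormedSpace.algebraMap_exp_comm (μ * s)).symm,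
        Algebra.algebraMap_eq_smul_one, Real.exp_eq_exp_ℝ]
    rw [he, Matrix.mul_smul, Matrix.mul_one, Matrix.smul_mul]
  · intro s
    have hpow : ∀ k : ℕ, (s • Gd) ^ k * B = (s ^ k) • B := by
      intro k
      induction k with
      | zero => simp
      | succ k ih =>
        rw [pow_succ, Matrix.mul_assoc, Matrix.smul_mul, hGdB, Matrix.mul_smul, ih,
          smul_smul, pow_succ']
    let L : Matrix (Fin n) (Fin n) ℝ →ₗ[ℝ] Matrix (Fin n) (Fin m) ℝ :=
      { toFun := fun X => X * B
        map_add' := fun X Y => Matrix.add_mul X Y B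
        map_smul' := fun c X => Matrix.smul_mul c X B }
    let L' : Matrix (Fin n) (Fin n) ℝ →L[ℝ] Matrix (Fin n) (Fin m) ℝ :=
      ⟨L, L.continuous_of_finiteDimensional⟩
    have hmap : NormedSpace.exp (s • Gd) * B
        = ∑' k : ℕ, ((k.factorial : ℝ)⁻¹ • (s • Gd) ^ k) * B := by
      rw [NormedSpace.exp_eq_tsum ℝ]
      exact (L'.map_tsum (NormedSpace.expSeries_summable' (𝕂 := ℝ) (x := s • Gd)))
    rw [hmap]
    have hterm : ∀ k : ℕ, ((k.factorial : ℝ)⁻¹ • (s • Gd) ^ k) * B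
        = ((k.factorial : ℝ)⁻¹ * s ^ k) • B := by
      intro k
      rw [Matrix.smul_mul, hpow, smul_smul]
    simp_rw [hterm]
    have hsum : Summable fun k : ℕ => (k.factorial : ℝ)⁻¹ * s ^ k := by
      have := NormedSpace.expSeries_summable' (𝕂 := ℝ) (x := s)
      simpa [smul_eq_mul] using this
    rw [hsum.tsum_smul_const B]
    congr 1
    rw [Real.exp_eq_exp_ℝ, NormedSpace.exp_eq_tsum ℝ]
    simp [smul_eq_mul]
end

section
/- Let H ∈ ℝ^{n×n} be invertible, G₀ ∈ ℝ^{n×n} be such that H·(−G₀)·H^{−1} is a Metzler matrix, and let μ ∈ [−1, 0), G_d = I_n + μ·G₀. Let P ∈ ℝ^{n×n} be symmetric positive definite with P·G_d + G_dᵀ·P ≻ 0, let ‖x‖ = √(xᵀPx), d(s) = exp(s·G_d), and let ‖·‖_d be the canonical homogeneous norm. Define Ψ(x) = ‖x‖_d·d(−ln‖x‖_d)·x for x ≠ 0 and Ψ(0) = 0, and the cones Ω_lin = {x : all components of H·Ψ(x) are ≥ 0} and Ω̃_lin = {x : all components of H·x are ≥ 0}. Then, with B = {x : ‖x‖ ≤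 1} the closed unit ball, (Ω̃_lin ∩ B) ⊆ (Ω_lin ∩ B). In particular, for s ≤ 0 and μ·s ≥ 0, every entry of the matrix e^{s}·H·d(−s)·H^{−1} = exp(−s·μ·H·G₀·H^{−1}) is nonnegative. -/
open Matrix Filter Topology Set

/-- `hd` is the canonical homogeneous norm induced by the norm `N`. -/
def IsCanonHomNorm {n : ℕ} (G : Matrix (Fin n) (Fin n) ℝ) (N : (Fin n → ℝ) → ℝ)
    (hd : (Fin n → ℝ) → ℝ) : Prop :=
  hd 0 = 0 ∧ ∀ x : Fin n → ℝ, x ≠ 0 →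
    0 < hd x ∧ N (dilMat G (-Real.log (hd x)) *ᵥ x) = 1

section Aux

variable {n : ℕ}

lemma pow_entry_nonneg {M : Matrix (Fin n) (Fin n) ℝ} (h : ∀ i j, 0 ≤ M i j) :
    ∀ k : ℕ, ∀ i j, 0 ≤ (M ^ k) i j := by
  intro k
  induction k with
  | zero => intro i j; rw [pow_zero]; by_cases hij : i = j <;> simp [Matrix.one_apply, hij]
  | succ k ih =>
    intro i j
    rw [pow_succ, Matrix.mul_apply]
    exact Finset.sum_nonneg fun l _ => mul_nonneg (ih i l) (h l j)

lemma exp_entry_nonneg {M : Matrix (Fin n) (Fin n) ℝ} (h : ∀ i j, 0 ≤ M i j) (i j : Fin n) :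
    0 ≤ (NormedSpace.exp M) i j := by
  letI : SeminormedRing (Matrix (Fin n) (Fin n) ℝ) := Matrix.linftyOpSemiNormedRing
  letI : NormedRing (Matrix (Fin n) (Fin n) ℝ) := Matrix.linftyOpNormedRing
  letI : NormedAlgebra ℝ (Matrix (Fin n) (Fin n) ℝ) := Matrix.linftyOpNormedAlgebra
  have hs : Summable (fun k : ℕ => ((k.factorial : ℝ))⁻¹ • M ^ k) :=
    NormedSpace.expSeries_summable' (𝕂 := ℝ) M
  let L : Matrix (Fin n) (Fin n) ℝ →ₗ[ℝ] ℝ :=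
    { toFun := fun A => A i j
      map_add' := fun A B => rfl
      map_smul' := fun c A => rfl }
  let E := LinearMap.toContinuousLinearMap L
  have hexp : NormedSpace.exp M = ∑' k : ℕ, ((k.factorial : ℝ))⁻¹ • M ^ k := by
    rw [NormedSpace.exp_eq_tsum ℝ]
  have h2 : HasSum (fun k : ℕ => E (((k.factorial : ℝ))⁻¹ • M ^ k))
      (E (NormedSpace.exp M)) := by
    rw [hexp]; exact hs.hasSum.mapL E
  have h3 : 0 ≤ E (NormedSpace.exp M) :=
    hasSum_le (fun k => by
      simp only [E, L, LinearMap.coe_toContinuousLinearMap', LinearMap.coe_mk, AddHom.coe_mk,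
        Matrix.smul_apply, smul_eq_mul]
      exact mul_nonneg (by positivity) (pow_entry_nonneg h k i j)) hasSum_zero h2
  exact h3

lemma exp_smul_one (c : ℝ) :
    NormedSpace.exp (c • (1 : Matrix (Fin n) (Fin n) ℝ)) =
      Real.exp c • (1 : Matrix (Fin n) (Fin n) ℝ) := by
  letI : SeminormedRing (Matrix (Fin n) (Fin n) ℝ) := Matrix.linftyOpSemiNormedRing
  letI : NormedRing (Matrix (Fin n) (Fin n) ℝ) := Matrix.linftyOpNormedRing
  letI : NormedAlgebra ℝ (Matrix (Fin n) (Fin n) ℝ) := Matrix.linftyOpNormedAlgebra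
  have h1 : c • (1 : Matrix (Fin n) (Fin n) ℝ) = algebraMap ℝ _ c :=
    (Algebra.algebraMap_eq_smul_one c).symm
  erw [h1, ← NormedSpace.algebraMap_exp_comm, ← Real.exp_eq_exp_ℝ,
    Algebra.algebraMap_eq_smul_one]

lemma exp_metzler_nonneg {M : Matrix (Fin n) (Fin n) ℝ} (h : ∀ i j, i ≠ j → 0 ≤ M i j)
    (i j : Fin n) : 0 ≤ (NormedSpace.exp M) i j := by
  set c : ℝ := ∑ l, |M l l| with hc
  have hcl : ∀ l : Fin n, |M l l| ≤ c :=
    fun l => Finset.single_le_sum (f := fun l => |M l l|) (fun _ _ => abs_nonneg _)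
      (Finset.mem_univ l)
  have hnn : ∀ a b : Fin n, 0 ≤ (M + c • (1 : Matrix (Fin n) (Fin n) ℝ)) a b := by
    intro a b
    by_cases hab : a = b
    · subst hab
      simp only [Matrix.add_apply, Matrix.smul_apply, Matrix.one_apply_eq, smul_eq_mul, mul_one]
      have := hcl a
      have := neg_abs_le (M a a)
      linarith
    · simp only [Matrix.add_apply, Matrix.smul_apply, Matrix.one_apply_ne hab, smul_eq_mul,
        mul_zero, add_zero]
      exact h a b hab
  have hcomm : Commute ((-c) • (1 : Matrix (Fin n) (Fin n) ℝ))
      (M + c • (1 : Matrix (Fin n) (Fin n) ℝ)) := by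
    apply Commute.smul_left
    exact Commute.one_left _
  have hsplit : M = (-c) • (1 : Matrix (Fin n) (Fin n) ℝ) + (M + c • 1) := by
    rw [neg_smul]; abel
  have hstep : NormedSpace.exp M =
      Real.exp (-c) • NormedSpace.exp (M + c • (1 : Matrix (Fin n) (Fin n) ℝ)) := by
    conv_lhs => rw [hsplit]
    rw [Matrix.exp_add_of_commute _ _ hcomm, exp_smul_one, Matrix.smul_mul, one_mul]
  rw [hstep, Matrix.smul_apply, smul_eq_mul]
  exact mul_nonneg (Real.exp_nonneg _) (exp_entry_nonneg hnn i j)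

lemma key_part2 (H G₀ : Matrix (Fin n) (Fin n) ℝ)
    (hH : IsUnit H.det)
    (hMetzler : ∀ i j : Fin n, i ≠ j → 0 ≤ (H * (-G₀) * H⁻¹) i j)
    (μ : ℝ)
    (Gd : Matrix (Fin n) (Fin n) ℝ) (hGd : Gd = 1 + μ • G₀)
    (s : ℝ) (hμs : 0 ≤ μ * s) :
    Real.exp s • (H * dilMat Gd (-s) * H⁻¹) =
      NormedSpace.exp ((-(s * μ)) • (H * G₀ * H⁻¹)) ∧
    ∀ i j : Fin n, 0 ≤ (Real.exp s • (H * dilMat Gd (-s) * H⁻¹)) i j := by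
  have hU : IsUnit H := (Matrix.isUnit_iff_isUnit_det H).mpr hH
  have hsplit : (-s) • Gd = (-s) • (1 : Matrix (Fin n) (Fin n) ℝ) + (-(s * μ)) • G₀ := by
    rw [hGd, smul_add, smul_smul]
    ring_nf
  have hcomm : Commute ((-s) • (1 : Matrix (Fin n) (Fin n) ℝ)) ((-(s * μ)) • G₀) :=
    Commute.smul_left (Commute.smul_right (Commute.one_left _) _) _
  have hexp : dilMat Gd (-s) =
      Real.exp (-s) • NormedSpace.exp ((-(s * μ)) • G₀) := by
    rw [dilMat, hsplit, Matrix.exp_add_of_commute _ _ hcomm, exp_smul_one,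
      Matrix.smul_mul, one_mul]
  have hmain : Real.exp s • (H * dilMat Gd (-s) * H⁻¹) =
      NormedSpace.exp ((-(s * μ)) • (H * G₀ * H⁻¹)) := by
    rw [hexp]
    have h1 : H * (Real.exp (-s) • NormedSpace.exp ((-(s * μ)) • G₀)) * H⁻¹ =
        Real.exp (-s) • (H * NormedSpace.exp ((-(s * μ)) • G₀) * H⁻¹) := by
      rw [Matrix.mul_smul, Matrix.smul_mul]
    rw [h1, smul_smul, ← Real.exp_add, add_neg_cancel, Real.exp_zero, one_smul]
    have h2 : (-(s * μ)) • (H * G₀ * H⁻¹) = H * ((-(s * μ)) • G₀) * H⁻¹ := by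
      rw [Matrix.mul_smul, Matrix.smul_mul]
    rw [h2, Matrix.exp_conj H _ hU]
  refine ⟨hmain, ?_⟩
  intro i j
  rw [hmain]
  apply exp_metzler_nonneg
  intro a b hab
  rw [Matrix.smul_apply, smul_eq_mul]
  have h3 : 0 ≤ -((H * G₀ * H⁻¹) a b) := by
    have := hMetzler a b hab
    have h4 : H * (-G₀) * H⁻¹ = -(H * G₀ * H⁻¹) := by
      rw [Matrix.mul_neg, Matrix.neg_mul]
    rw [h4] at this
    simpa using this
  have h5 : -(s * μ) ≤ 0 := by nlinarith
  nlinarith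

lemma hd_le_one (Gd : Matrix (Fin n) (Fin n) ℝ)
    (P : Matrix (Fin n) (Fin n) ℝ) (hP : P.PosDef)
    (hGdP : (P * Gd + Gdᵀ * P).PosDef)
    (hd : (Fin n → ℝ) → ℝ) (hhd : IsCanonHomNorm Gd (normP P) hd)
    (x : Fin n → ℝ) (hx : normP P x ≤ 1) : hd x ≤ 1 := by
  by_contra hcon
  push_neg at hcon
  have hx0 : x ≠ 0 := by
    rintro rfl
    rw [hhd.1] at hcon; linarith
  obtain ⟨hpos, hunit⟩ := hhd.2 x hx0
  letI : SeminormedRing (Matrix (Fin n) (Fin n) ℝ) := Matrix.linftyOpSemiNormedRing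
  letI : NormedRing (Matrix (Fin n) (Fin n) ℝ) := Matrix.linftyOpNormedRing
  letI : NormedAlgebra ℝ (Matrix (Fin n) (Fin n) ℝ) := Matrix.linftyOpNormedAlgebra
  set y : ℝ → (Fin n → ℝ) := fun s => NormedSpace.exp ((-s) • Gd) *ᵥ x with hy
  set f : ℝ → ℝ := fun s => y s ⬝ᵥ (P *ᵥ y s) with hf
  have hyne : ∀ s, y s ≠ 0 := by
    intro s hzero
    obtain ⟨u, hu⟩ := Matrix.isUnit_exp ((-s) • Gd)
    apply hx0
    have : x = (↑u⁻¹ : Matrix (Fin n) (Fin n) ℝ) *ᵥ ((↑u : Matrix (Fin n) (Fin n) ℝ) *ᵥ x) := by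
      rw [Matrix.mulVec_mulVec, u.inv_mul, Matrix.one_mulVec]
    rw [this, hu]
    have hz : (NormedSpace.exp ((-s) • Gd)) *ᵥ x = 0 := hzero
    rw [hz, Matrix.mulVec_zero]
  -- derivative of the matrix curve
  have hm : ∀ s : ℝ, HasDerivAt (fun s : ℝ => NormedSpace.exp ((-s) • Gd))
      (-(NormedSpace.exp ((-s) • Gd) * Gd)) s := by
    intro s
    have h1 := _root_.hasDerivAt_exp_smul_const (𝕂 := ℝ) Gd (-s)
    have h2 : HasDerivAt (fun u : ℝ => -u) (-1 : ℝ) s := (hasDerivAt_id s).neg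
    have h3 := h1.scomp s h2
    convert h3 using 1
    · rfl
    · rfl
    · rfl
    · rfl
    · simp only [neg_smul, one_smul]
      rfl
  -- entrywise derivative
  have hE : ∀ (s : ℝ) (i j : Fin n),
      HasDerivAt (fun s : ℝ => NormedSpace.exp ((-s) • Gd) i j)
        ((-(NormedSpace.exp ((-s) • Gd) * Gd)) i j) s := by
    intro s i j
    let L : Matrix (Fin n) (Fin n) ℝ →ₗ[ℝ] ℝ :=
      { toFun := fun A => A i j
        map_add' := fun _ _ => rfl
        map_smul' := fun _ _ => rfl }
    exact (LinearMap.toContinuousLinearMap L).hasFDerivAt.comp_hasDerivAt s (hm s)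
  -- derivative of components of y
  have hyd : ∀ (s : ℝ) (i : Fin n),
      HasDerivAt (fun s => y s i) ((-(Gd *ᵥ y s)) i) s := by
    intro s i
    have h2 : HasDerivAt (fun s : ℝ => ∑ j, NormedSpace.exp ((-s) • Gd) i j * x j)
        (∑ j, (-(NormedSpace.exp ((-s) • Gd) * Gd)) i j * x j) s :=
      HasDerivAt.fun_sum fun j _ => (hE s i j).mul_const (x j)
    have h3 : (-(Gd *ᵥ y s)) i = ∑ j, (-(NormedSpace.exp ((-s) • Gd) * Gd)) i j * x j := by
      have hcm : NormedSpace.exp ((-s) • Gd) * Gd = Gd * NormedSpace.exp ((-s) • Gd) :=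
        (((Commute.refl Gd).smul_left (-s)).exp_left).eq
    
      calc (-(Gd *ᵥ y s)) i = ((-(Gd * NormedSpace.exp ((-s) • Gd))) *ᵥ x) i := by
            rw [hy]; simp only [Matrix.neg_mulVec, Matrix.mulVec_mulVec, Pi.neg_apply]
      _ = ((-(NormedSpace.exp ((-s) • Gd) * Gd)) *ᵥ x) i := by rw [hcm]
      _ = ∑ j, (-(NormedSpace.exp ((-s) • Gd) * Gd)) i j * x j := rfl
    rw [h3]
    exact h2
  -- derivative of f
  have hfd : ∀ s : ℝ, HasDerivAt f (-(y s ⬝ᵥ ((P * Gd + Gdᵀ * P) *ᵥ y s))) s := by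
    intro s
    have h2 : HasDerivAt (fun s => ∑ i, y s i * ∑ j, P i j * y s j)
        (∑ i, ((-(Gd *ᵥ y s)) i * (∑ j, P i j * y s j) +
          y s i * (∑ j, P i j * (-(Gd *ᵥ y s)) j))) s :=
      HasDerivAt.fun_sum fun i _ =>
        (hyd s i).mul (HasDerivAt.fun_sum fun j _ => (hyd s j).const_mul (P i j))
    have halg : (∑ i, ((-(Gd *ᵥ y s)) i * (∑ j, P i j * y s j) +
          y s i * (∑ j, P i j * (-(Gd *ᵥ y s)) j))) =
        -(y s ⬝ᵥ ((P * Gd + Gdᵀ * P) *ᵥ y s)) := by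
      have e1 : ∑ i, ((-(Gd *ᵥ y s)) i * (∑ j, P i j * y s j) +
          y s i * (∑ j, P i j * (-(Gd *ᵥ y s)) j)) =
          (-(Gd *ᵥ y s)) ⬝ᵥ (P *ᵥ y s) + y s ⬝ᵥ (P *ᵥ (-(Gd *ᵥ y s))) := by
        rw [Finset.sum_add_distrib]; rfl
      rw [e1, neg_dotProduct, Matrix.mulVec_neg, dotProduct_neg,
        Matrix.add_mulVec, dotProduct_add]
      have e2 : (P * Gd) *ᵥ y s = P *ᵥ (Gd *ᵥ y s) := (Matrix.mulVec_mulVec _ _ _).symm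
      have e3 : y s ⬝ᵥ ((Gdᵀ * P) *ᵥ y s) = (Gd *ᵥ y s) ⬝ᵥ (P *ᵥ y s) := by
        rw [← Matrix.mulVec_mulVec, Matrix.dotProduct_mulVec (y s) Gdᵀ,
          Matrix.vecMul_transpose]
      rw [e2, e3]
      ring
    have h4 : HasDerivAt (fun s => ∑ i, y s i * ∑ j, P i j * y s j)
        (-(y s ⬝ᵥ ((P * Gd + Gdᵀ * P) *ᵥ y s))) s := halg ▸ h2
    exact h4
  have hdiff : Differentiable ℝ f := fun s => (hfd s).differentiableAt
  have hderiv : ∀ s, deriv f s < 0 := by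
    intro s
    rw [(hfd s).deriv]
    have hq : 0 < y s ⬝ᵥ ((P * Gd + Gdᵀ * P) *ᵥ y s) := by
      simpa using hGdP.dotProduct_mulVec_pos (hyne s)
    linarith
  have hanti : StrictAnti f := strictAnti_of_deriv_neg hderiv
  set s₀ := Real.log (hd x) with hs₀def
  have hs₀ : 0 < s₀ := Real.log_pos hcon
  have hy0 : y 0 = x := by
    simp [hy, neg_zero, zero_smul, NormedSpace.exp_zero, Matrix.one_mulVec]
  have hf0 : f 0 ≤ 1 := by
    have hxP : normP P x ≤ 1 := hx
    rw [normP] at hxP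
    have hnn : 0 ≤ x ⬝ᵥ (P *ᵥ x) := le_of_lt (by simpa using hP.dotProduct_mulVec_pos hx0)
    have hfeq : f 0 = x ⬝ᵥ (P *ᵥ x) := by rw [hf]; simp only [hy0]
    nlinarith [Real.sq_sqrt hnn, Real.sqrt_nonneg (x ⬝ᵥ (P *ᵥ x))]
  have hf1 : f s₀ = 1 := by
    have h1 : normP P (y s₀) = 1 := hunit
    rw [normP] at h1
    exact Real.sqrt_eq_one.mp h1
  have := hanti hs₀
  linarith

end Aux

/-- if `H(−G₀)H⁻¹` is Metzler and `μ ∈ [−1,0)`, then locally (inside the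
unit ball) the linear cone `Ω̃_lin = {x : Hx ≥ 0}` is contained in the `d`-homogeneous
cone `Ω_lin = {x : HΨ(x) ≥ 0}`; in particular for `s ≤ 0` with `μs ≥ 0` the matrix
`e^s H d(−s) H⁻¹ = exp(−sμ·HG₀H⁻¹)` has nonnegative entries. -/
theorem stmt19 {n : ℕ} (H G₀ : Matrix (Fin n) (Fin n) ℝ)
    (hH : IsUnit H.det)
    (hMetzler : ∀ i j : Fin n, i ≠ j → 0 ≤ (H * (-G₀) * H⁻¹) i j)
    (μ : ℝ) (hμ₁ : -1 ≤ μ) (hμ₂ : μ < 0)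
    (Gd : Matrix (Fin n) (Fin n) ℝ) (hGd : Gd = 1 + μ • G₀)
    (P : Matrix (Fin n) (Fin n) ℝ) (hP : P.PosDef)
    (hGdP : (P * Gd + Gdᵀ * P).PosDef)
    (hd : (Fin n → ℝ) → ℝ) (hhd : IsCanonHomNorm Gd (normP P) hd)
    (Ψ : (Fin n → ℝ) → (Fin n → ℝ))
    (hΨ : ∀ x : Fin n → ℝ, Ψ x = hd x • (dilMat Gd (-Real.log (hd x)) *ᵥ x)) :
    ({x : Fin n → ℝ | ∀ i, 0 ≤ (H *ᵥ x) i} ∩ {x : Fin n → ℝ | normP P x ≤ 1} ⊆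
      {x : Fin n → ℝ | ∀ i, 0 ≤ (H *ᵥ Ψ x) i} ∩ {x : Fin n → ℝ | normP P x ≤ 1}) ∧
    (∀ s : ℝ, s ≤ 0 → 0 ≤ μ * s →
      Real.exp s • (H * dilMat Gd (-s) * H⁻¹) =
        NormedSpace.exp ((-(s * μ)) • (H * G₀ * H⁻¹)) ∧
      ∀ i j : Fin n, 0 ≤ (Real.exp s • (H * dilMat Gd (-s) * H⁻¹)) i j) := by
  constructor
  · rintro x ⟨hx1, hx2⟩
    refine ⟨?_, hx2⟩
    by_cases hx0 : x = 0
    · subst hx0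
      intro i
      rw [hΨ 0, hhd.1, zero_smul, Matrix.mulVec_zero]
      exact le_refl 0
    · set s := Real.log (hd x) with hsdef
      have hhdpos : 0 < hd x := (hhd.2 x hx0).1
      have hhdle : hd x ≤ 1 := hd_le_one Gd P hP hGdP hd hhd x hx2
      have hs : s ≤ 0 := Real.log_nonpos (le_of_lt hhdpos) hhdle
      have hμs : 0 ≤ μ * s := by nlinarith
      obtain ⟨-, hNN⟩ := key_part2 H G₀ hH hMetzler μ Gd hGd s hμs
      have hKnn : ∀ i j, 0 ≤ (H * dilMat Gd (-s) * H⁻¹) i j := by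
        intro i j
        have := hNN i j
        rw [Matrix.smul_apply, smul_eq_mul] at this
        nlinarith [Real.exp_pos s]
      intro i
      have hrw : H *ᵥ Ψ x = hd x • ((H * dilMat Gd (-s) * H⁻¹) *ᵥ (H *ᵥ x)) := by
        rw [hΨ x, Matrix.mulVec_smul]
        congr 1
        rw [Matrix.mulVec_mulVec, Matrix.mulVec_mulVec]
        congr 1
        rw [Matrix.mul_assoc (H * dilMat Gd (-s)) H⁻¹ H,
          Matrix.nonsing_inv_mul H hH, Matrix.mul_one]
      rw [hrw, Pi.smul_apply, smul_eq_mul]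
      apply mul_nonneg (le_of_lt hhdpos)
      have : ((H * dilMat Gd (-s) * H⁻¹) *ᵥ (H *ᵥ x)) i =
          ∑ j, (H * dilMat Gd (-s) * H⁻¹) i j * (H *ᵥ x) j := rfl
      rw [this]
      exact Finset.sum_nonneg fun j _ => mul_nonneg (hKnn i j) (hx1 j)
  · intro s hs hμs
    exact key_part2 H G₀ hH hMetzler μ Gd hGd s hμs
end
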